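/- Let w ∈ 𝔏^{α,p}(ℝ^{n+1}) with p > ρ > 1 and p > 1/α, and let w_*(x,t) = (M_x(w(·,t)^ρ)(x))^{1/ρ}, where M_x is the n-dimensional Hardy–Littlewood maximal operator in x. Then for almost every t ∈ ℝ, w_*(·,t) is an A₂(ℝ^n) weight with A₂ constant uniform in t. -/

import Mathlib

open MeasureTheory ENNReal

noncomputable section

/-- A cube in `ℝⁿ` with center `c` and side length `r`. -/
def cube (n : ℕ) (c : EuclideanSpace ℝ (Fin n)) (r : ℝ) : Set (EuclideanSpace ℝ (Fin n)) :=
  {x | ∀ i, |x i - c i| ≤ r / 2}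

/-- A cube in space-time `ℝⁿ × ℝ ≅ ℝ^{n+1}` with center `(c, τ)` and side length `r`. -/
def cubeP (n : ℕ) (c : EuclideanSpace ℝ (Fin n)) (τ r : ℝ) :
    Set (EuclideanSpace ℝ (Fin n) × ℝ) :=
  (cube n c r) ×ˢ Set.Icc (τ - r / 2) (τ + r / 2)

/-- The Morrey–Campanato norm on `ℝ^{n+1}` of a real function. -/
def morreyNormP (n : ℕ) (α p : ℝ) (w : EuclideanSpace ℝ (Fin n) × ℝ → ℝ) : ℝ≥0∞ :=
  ⨆ (c : EuclideanSpace ℝ (Fin n)) (τ : ℝ) (r : ℝ) (_ : 0 < r),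
    ENNReal.ofReal (r ^ α) * (ENNReal.ofReal (r ^ ((n : ℝ) + 1)))⁻¹ ^ (1 / p) *
      (∫⁻ z in cubeP n c τ r, ENNReal.ofReal (|w z| ^ p)) ^ (1 / p)

/-- The `n`-dimensional maximal function in the `x` variable at exponent `ρ`:
`w_*(x,t) = sup_{Q′ ∋ x} (|Q′|⁻¹ ∫_{Q′} |w(y,t)|^ρ dy)^{1/ρ}`, over cubes centered at `x`. -/
def xMaximal (n : ℕ) (ρ : ℝ) (w : EuclideanSpace ℝ (Fin n) × ℝ → ℝ)
    (x : EuclideanSpace ℝ (Fin n)) (t : ℝ) : ℝ≥0∞ :=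
  (⨆ (r : ℝ) (_ : 0 < r),
      (ENNReal.ofReal (r ^ (n : ℝ)))⁻¹ * ∫⁻ y in cube n x r,
        ENNReal.ofReal (|w (y, t)| ^ ρ)) ^ (1 / ρ)

/-- The Morrey–Campanato norm on `ℝ^{n+1}` of an `ℝ≥0∞`-valued function. -/
def morreyNormPE (n : ℕ) (α p : ℝ) (W : EuclideanSpace ℝ (Fin n) × ℝ → ℝ≥0∞) : ℝ≥0∞ :=
  ⨆ (c : EuclideanSpace ℝ (Fin n)) (τ : ℝ) (r : ℝ) (_ : 0 < r),
    ENNReal.ofReal (r ^ α) * (ENNReal.ofReal (r ^ ((n : ℝ) + 1)))⁻¹ ^ (1 / p) *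
      (∫⁻ z in cubeP n c τ r, W z ^ p) ^ (1 / p)

namespace A2
variable {n : ℕ}

abbrev Pt (n : ℕ) := EuclideanSpace ℝ (Fin n)

lemma self_mem_cube {x : Pt n} {r : ℝ} (hr : 0 ≤ r) : x ∈ cube n x r := by
  intro i; simpa using by linarith

lemma cube_symm {x c : Pt n} {r : ℝ} (h : x ∈ cube n c r) : c ∈ cube n x r := by
  intro i; rw [abs_sub_comm]; exact h i

lemma cube_subset {x c : Pt n} {s r S : ℝ} (hx : x ∈ cube n c r) (h : s + r ≤ S) :
    cube n x s ⊆ cube n c S := by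
  intro z hz i
  calc |z i - c i| ≤ |z i - x i| + |x i - c i| := abs_sub_le _ _ _
    _ ≤ s / 2 + r / 2 := add_le_add (hz i) (hx i)
    _ ≤ S / 2 := by linarith

lemma cube_subset_of_inter {a b : Pt n} {s q : ℝ} (h : (cube n a s ∩ cube n b q).Nonempty)
    (hsq : s ≤ 2 * q) : cube n a s ⊆ cube n b (5 * q) := by
  obtain ⟨z, hza, hzb⟩ := h
  intro y hy i
  have h1 : |y i - z i| ≤ |y i - a i| + |a i - z i| := abs_sub_le _ _ _
  have h2 : |y i - b i| ≤ |y i - z i| + |z i - b i| := abs_sub_le _ _ _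
  have h3 : |a i - z i| ≤ s / 2 := by rw [abs_sub_comm]; exact hza i
  have := hy i; have := hzb i
  have : |y i - b i| ≤ s / 2 + s / 2 + q / 2 := by linarith [hy i, hzb i]
  linarith

lemma measurableSet_cube {c : Pt n} {r : ℝ} : MeasurableSet (cube n c r) := by
  have heq : cube n c r = ⋂ i, (fun x : Pt n => x i) ⁻¹' (Set.Icc (c i - r/2) (c i + r/2)) := by
    ext x
    simp only [cube, Set.mem_setOf_eq, Set.mem_iInter, Set.mem_preimage, Set.mem_Icc, abs_le]
    constructor
    · intro h i; obtain ⟨h1, h2⟩ := h i; exact ⟨by linarith, by linarith⟩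
    · intro h i; obtain ⟨h1, h2⟩ := h i; exact ⟨by linarith, by linarith⟩
  rw [heq]
  refine MeasurableSet.iInter fun i => ?_
  have hm : Measurable fun x : Pt n => x i :=
    (EuclideanSpace.proj i : EuclideanSpace ℝ (Fin n) →L[ℝ] ℝ).continuous.measurable
  exact hm measurableSet_Icc

lemma volume_cube {c : Pt n} {r : ℝ} (hr : 0 ≤ r) :
    volume (cube n c r) = ENNReal.ofReal (r ^ (n : ℝ)) := by
  have hpre : cube n c r =
      (MeasurableEquiv.toLp 2 (Fin n → ℝ)).symm ⁻¹'
        (Set.univ.pi fun i => Set.Icc (c i - r/2) (c i + r/2)) := by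
    ext x
    simp only [cube, Set.mem_preimage, Set.mem_pi, Set.mem_univ, forall_true_left,
      Set.mem_setOf_eq, Set.mem_Icc, MeasurableEquiv.coe_toLp_symm, abs_le]
    have hxx : ∀ i, (WithLp.ofLp x) i = x i := fun _ => rfl
    constructor
    · intro h i; rw [hxx i]; obtain ⟨h1, h2⟩ := h i; exact ⟨by linarith, by linarith⟩
    · intro h i; have := h i; rw [hxx i] at this
      obtain ⟨h1, h2⟩ := this; exact ⟨by linarith, by linarith⟩
  rw [hpre, (EuclideanSpace.volume_preserving_symm_measurableEquiv_toLp (Fin n)).measure_preimage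
    (MeasurableSet.univ_pi fun i => measurableSet_Icc).nullMeasurableSet]
  rw [volume_pi_pi]
  simp only [Real.volume_Icc]
  have h2 : ∀ i : Fin n, ENNReal.ofReal ((c i + r/2) - (c i - r/2)) = ENNReal.ofReal r := by
    intro i; congr 1; ring
  simp_rw [h2]
  rw [Finset.prod_const, Finset.card_univ, Fintype.card_fin,
    Real.rpow_natCast, ENNReal.ofReal_pow hr]

lemma cube_zero_eq_univ (c : Pt 0) (r : ℝ) : cube 0 c r = Set.univ := by
  ext x; simp only [cube, Set.mem_setOf_eq, Set.mem_univ, iff_true]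
  exact fun i => i.elim0



def mx (n : ℕ) (f : Pt n → ℝ≥0∞) (x : Pt n) : ℝ≥0∞ :=
  ⨆ (s : ℝ) (_ : 0 < s), (ENNReal.ofReal (s ^ (n : ℝ)))⁻¹ * ∫⁻ y in cube n x s, f y

def mxIn (n : ℕ) (G : Set (Pt n)) (f : Pt n → ℝ≥0∞) (x : Pt n) : ℝ≥0∞ :=
  ⨆ (s : ℝ) (_ : 0 < s), (ENNReal.ofReal (s ^ (n : ℝ)))⁻¹ * ∫⁻ y in cube n x s ∩ G, f y

variable {n : ℕ}

lemma vne0 {r : ℝ} (hr : 0 < r) : ENNReal.ofReal (r ^ (n : ℝ)) ≠ 0 :=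
  (ENNReal.ofReal_pos.mpr (Real.rpow_pos_of_pos hr _)).ne'

lemma vnetop {r : ℝ} : ENNReal.ofReal (r ^ (n : ℝ)) ≠ ⊤ := ENNReal.ofReal_ne_top

lemma scale {a r : ℝ} (ha : 0 ≤ a) (hr : 0 ≤ r) :
    ENNReal.ofReal ((a * r) ^ (n : ℝ)) =
      ENNReal.ofReal (a ^ (n : ℝ)) * ENNReal.ofReal (r ^ (n : ℝ)) := by
  rw [Real.mul_rpow ha hr, ENNReal.ofReal_mul (Real.rpow_nonneg ha _)]

/-- Lower bound for the maximal function on a cube. -/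
lemma le_mx (f : Pt n → ℝ≥0∞) {c : Pt n} {r : ℝ} (hr : 0 < r) {y : Pt n}
    (hy : y ∈ cube n c r) :
    (ENNReal.ofReal ((4 * r) ^ (n : ℝ)))⁻¹ * ∫⁻ z in cube n c (3 * r), f z ≤ mx n f y := by
  have hsub : cube n c (3 * r) ⊆ cube n y (4 * r) := cube_subset (cube_symm hy) (by linarith)
  refine le_iSup₂_of_le (4 * r) (by linarith) ?_
  exact mul_le_mul_right (lintegral_mono' (Measure.restrict_mono hsub le_rfl) le_rfl) _

/-- Splitting of the maximal function: local part plus a constant bounded by the infimum. -/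
lemma mx_le_add (f : Pt n → ℝ≥0∞) {c : Pt n} {r : ℝ} (hr : 0 < r) {x : Pt n}
    (hx : x ∈ cube n c r) :
    mx n f x ≤ mxIn n (cube n c (3 * r)) f x +
      ENNReal.ofReal ((2 : ℝ) ^ (n : ℝ)) * ⨅ (y : Pt n) (_ : y ∈ cube n c r), mx n f y := by
  set G := cube n c (3 * r) with hG
  set c2 := ENNReal.ofReal ((2 : ℝ) ^ (n : ℝ)) with hc2
  have hc20 : c2 ≠ 0 := vne0 (by norm_num)
  have hc2top : c2 ≠ ⊤ := vnetop
  refine iSup₂_le fun s hs => ?_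
  have hsplit : (ENNReal.ofReal (s ^ (n : ℝ)))⁻¹ * ∫⁻ y in cube n x s, f y ≤
      ((ENNReal.ofReal (s ^ (n : ℝ)))⁻¹ * ∫⁻ y in cube n x s ∩ G, f y) +
      ((ENNReal.ofReal (s ^ (n : ℝ)))⁻¹ * ∫⁻ y in cube n x s \ G, f y) := by
    rw [← mul_add]
    refine mul_le_mul_right ?_ _
    calc ∫⁻ y in cube n x s, f y
        = ∫⁻ y in (cube n x s ∩ G) ∪ (cube n x s \ G), f y := by
          rw [Set.inter_union_diff]
      _ ≤ ∫⁻ y, f y ∂(volume.restrict (cube n x s ∩ G) + volume.restrict (cube n x s \ G)) :=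
          lintegral_mono' (Measure.restrict_union_le _ _) le_rfl
      _ = _ := lintegral_add_measure _ _ _
  refine hsplit.trans (add_le_add (le_iSup₂_of_le s hs le_rfl) ?_)
  by_cases hs2 : s ≤ 2 * r
  · have hempty : cube n x s \ G = ∅ :=
      Set.diff_eq_empty.mpr (cube_subset hx (by linarith))
    simp [hempty]
  · push_neg at hs2
    have key : ∀ y ∈ cube n c r,
        (ENNReal.ofReal (s ^ (n : ℝ)))⁻¹ * ∫⁻ z in cube n x s \ G, f z ≤ c2 * mx n f y := by
      intro y hy
      have hxy : x ∈ cube n y (2 * r) := by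
        intro i
        have h1 : |x i - y i| ≤ |x i - c i| + |c i - y i| := abs_sub_le _ _ _
        have h2 : |c i - y i| ≤ r / 2 := by rw [abs_sub_comm]; exact hy i
        have h3 := hx i
        have : |x i - y i| ≤ r := by linarith
        linarith
      have hsubc : cube n x s \ G ⊆ cube n y (2 * s) :=
        Set.diff_subset.trans (cube_subset hxy (by linarith))
      have hinv : (ENNReal.ofReal ((2 * s) ^ (n : ℝ)))⁻¹ =
          c2⁻¹ * (ENNReal.ofReal (s ^ (n : ℝ)))⁻¹ := by
        rw [scale (by norm_num) hs.le, ENNReal.mul_inv (Or.inl hc20) (Or.inl vnetop), hc2]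
      calc (ENNReal.ofReal (s ^ (n : ℝ)))⁻¹ * ∫⁻ z in cube n x s \ G, f z
          ≤ (ENNReal.ofReal (s ^ (n : ℝ)))⁻¹ * ∫⁻ z in cube n y (2 * s), f z :=
            mul_le_mul_right (lintegral_mono' (Measure.restrict_mono hsubc le_rfl) le_rfl) _
        _ = c2 * ((ENNReal.ofReal ((2 * s) ^ (n : ℝ)))⁻¹ * ∫⁻ z in cube n y (2 * s), f z) := by
            rw [hinv, ← mul_assoc, ← mul_assoc, ENNReal.mul_inv_cancel hc20 hc2top, one_mul]
        _ ≤ c2 * mx n f y := by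
            simp only [mx]
            refine mul_le_mul_right ?_ c2
            exact le_iSup₂_of_le (2 * s) (mul_pos two_pos hs) le_rfl
    have h1 : c2⁻¹ * ((ENNReal.ofReal (s ^ (n : ℝ)))⁻¹ * ∫⁻ z in cube n x s \ G, f z) ≤
        ⨅ (y : Pt n) (_ : y ∈ cube n c r), mx n f y := by
      refine le_iInf fun y => le_iInf fun hy => ?_
      calc c2⁻¹ * ((ENNReal.ofReal (s ^ (n : ℝ)))⁻¹ * ∫⁻ z in cube n x s \ G, f z)
          ≤ c2⁻¹ * (c2 * mx n f y) := mul_le_mul_right (key y hy) _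
        _ = mx n f y := by rw [← mul_assoc, ENNReal.inv_mul_cancel hc20 hc2top, one_mul]
    calc (ENNReal.ofReal (s ^ (n : ℝ)))⁻¹ * ∫⁻ z in cube n x s \ G, f z
        = c2 * (c2⁻¹ * ((ENNReal.ofReal (s ^ (n : ℝ)))⁻¹ * ∫⁻ z in cube n x s \ G, f z)) := by
          rw [← mul_assoc, ENNReal.mul_inv_cancel hc20 hc2top, one_mul]
      _ ≤ c2 * ⨅ (y : Pt n) (_ : y ∈ cube n c r), mx n f y := mul_le_mul_right h1 _

lemma coord_le_dist (z y : Pt n) (i : Fin n) : |z i - y i| ≤ dist z y := by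
  rw [EuclideanSpace.dist_eq]
  have h1 : |z i - y i| = Real.sqrt ((z i - y i) ^ 2) := (Real.sqrt_sq_eq_abs _).symm
  rw [h1]
  apply Real.sqrt_le_sqrt
  have : (z i - y i) ^ 2 = dist (z i) (y i) ^ 2 := by rw [Real.dist_eq, sq_abs]
  rw [this]
  exact Finset.single_le_sum (f := fun j => dist (z j) (y j) ^ 2)
    (fun j _ => sq_nonneg _) (Finset.mem_univ i)

/-- Weak (1,1) bound for the localized maximal function, via Vitali covering. -/
lemma weak_type (hn : 0 < n) (f : Pt n → ℝ≥0∞) {c : Pt n} {r : ℝ}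
    {lam : ℝ≥0∞} (hl0 : lam ≠ 0) (hltop : lam ≠ ⊤)
    (hB : (∫⁻ y in cube n c (3 * r), f y) ≠ ⊤) :
    volume {x | x ∈ cube n c r ∧ lam < mxIn n (cube n c (3 * r)) f x} ≤
      ENNReal.ofReal ((5 : ℝ) ^ (n : ℝ)) * lam⁻¹ * ∫⁻ y in cube n c (3 * r), f y := by
  set G := cube n c (3 * r) with hG
  set B := ∫⁻ y in G, f y with hBdef
  set R : ℝ := max 1 ((lam⁻¹ * B).toReal) with hR
  have hmem : ∀ x, lam < mxIn n G f x → ∃ s : ℝ, 0 < s ∧ s ≤ R ∧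
      lam * ENNReal.ofReal (s ^ (n : ℝ)) ≤ ∫⁻ y in cube n x s ∩ G, f y := by
    intro x hx
    rw [mxIn] at hx
    rw [lt_iSup_iff] at hx
    obtain ⟨s, hx⟩ := hx
    rw [lt_iSup_iff] at hx
    obtain ⟨hs, hlt⟩ := hx
    have hVs0 : ENNReal.ofReal (s ^ (n : ℝ)) ≠ 0 := vne0 hs
    have hkey : lam * ENNReal.ofReal (s ^ (n : ℝ)) ≤ ∫⁻ y in cube n x s ∩ G, f y := by
      have h1 := mul_le_mul_left hlt.le (ENNReal.ofReal (s ^ (n : ℝ)))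
      rwa [mul_comm ((ENNReal.ofReal (s ^ (n : ℝ)))⁻¹) _, mul_assoc,
        ENNReal.inv_mul_cancel hVs0 vnetop, mul_one] at h1
    have hIB : (∫⁻ y in cube n x s ∩ G, f y) ≤ B :=
      lintegral_mono' (Measure.restrict_mono Set.inter_subset_right le_rfl) le_rfl
    have h2 : ENNReal.ofReal (s ^ (n : ℝ)) ≤ lam⁻¹ * B := by
      have h3 := mul_le_mul_right (hkey.trans hIB) lam⁻¹
      rwa [← mul_assoc, ENNReal.inv_mul_cancel hl0 hltop, one_mul] at h3
    have hfin : lam⁻¹ * B ≠ ⊤ := ENNReal.mul_ne_top (ENNReal.inv_ne_top.mpr hl0) hB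
    have h3 : s ^ (n : ℝ) ≤ (lam⁻¹ * B).toReal :=
      (ENNReal.ofReal_le_iff_le_toReal hfin).mp h2
    have hsR : s ≤ R := by
      rcases le_or_gt s 1 with h | h
      · exact h.trans (le_max_left _ _)
      · have hle : s ≤ s ^ (n : ℝ) := by
          calc s = s ^ (1 : ℝ) := (Real.rpow_one s).symm
            _ ≤ s ^ (n : ℝ) := Real.rpow_le_rpow_of_exponent_le h.le (by exact_mod_cast hn)
        exact le_trans (hle.trans h3) (le_max_right _ _)
    exact ⟨s, hs, hsR, hkey⟩
  set t : Set (Pt n × ℝ) := {p | 0 < p.2 ∧ p.2 ≤ R ∧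
      lam * ENNReal.ofReal (p.2 ^ (n : ℝ)) ≤ ∫⁻ y in cube n p.1 p.2 ∩ G, f y} with ht
  obtain ⟨u, hut, hdisj, hcov⟩ := Vitali.exists_disjoint_subfamily_covering_enlargement
    (fun p : Pt n × ℝ => cube n p.1 p.2) t (fun p => p.2) 2 one_lt_two
    (fun p hp => hp.1.le) R (fun p hp => hp.2.1)
    (fun p hp => ⟨p.1, self_mem_cube hp.1.le⟩)
  have hucnt : u.Countable := by
    refine hdisj.countable_of_nonempty_interior fun p hp => ?_
    have hp2 : 0 < p.2 := (hut hp).1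
    have hball : Metric.ball p.1 (p.2 / 2) ⊆ cube n p.1 p.2 := by
      intro z hz i
      have h1 : |z i - p.1 i| ≤ dist z p.1 := coord_le_dist _ _ _
      have h2 : dist z p.1 < p.2 / 2 := Metric.mem_ball.mp hz
      linarith
    exact ⟨p.1, interior_maximal hball Metric.isOpen_ball (Metric.mem_ball_self (by linarith))⟩
  haveI : Countable ↥u := hucnt.to_subtype
  have hcover : {x | x ∈ cube n c r ∧ lam < mxIn n G f x} ⊆
      ⋃ b : ↥u, cube n (↑b : Pt n × ℝ).1 (5 * (↑b : Pt n × ℝ).2) := by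
    intro x hx
    obtain ⟨s, hs, hsR, hkey⟩ := hmem x hx.2
    have hpt : (x, s) ∈ t := ⟨hs, hsR, hkey⟩
    obtain ⟨b, hbu, hint, hba⟩ := hcov (x, s) hpt
    refine Set.mem_iUnion.mpr ⟨⟨b, hbu⟩, ?_⟩
    exact cube_subset_of_inter hint hba (self_mem_cube hs.le)
  have hpos : ∀ b : ↥u, 0 < ((↑b : Pt n × ℝ)).2 := fun b => (hut b.2).1
  have hsum : (∑' b : ↥u, ∫⁻ y in cube n (↑b : Pt n × ℝ).1 (↑b : Pt n × ℝ).2 ∩ G, f y) ≤ B := by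
    have hd : Pairwise (Function.onFun Disjoint
        fun b : ↥u => cube n (↑b : Pt n × ℝ).1 (↑b : Pt n × ℝ).2 ∩ G) := by
      intro b b' hbb'
      have hdj : Disjoint (cube n (↑b : Pt n × ℝ).1 (↑b : Pt n × ℝ).2)
          (cube n (↑b' : Pt n × ℝ).1 (↑b' : Pt n × ℝ).2) :=
        hdisj b.2 b'.2 (Subtype.coe_injective.ne hbb')
      exact hdj.mono Set.inter_subset_left Set.inter_subset_left
    have hmeas : ∀ b : ↥u, MeasurableSet (cube n (↑b : Pt n × ℝ).1 (↑b : Pt n × ℝ).2 ∩ G) :=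
      fun b => measurableSet_cube.inter measurableSet_cube
    calc (∑' b : ↥u, ∫⁻ y in cube n (↑b : Pt n × ℝ).1 (↑b : Pt n × ℝ).2 ∩ G, f y)
        = ∫⁻ y, f y ∂(Measure.sum fun b : ↥u =>
            volume.restrict (cube n (↑b : Pt n × ℝ).1 (↑b : Pt n × ℝ).2 ∩ G)) :=
          (lintegral_sum_measure _ _).symm
      _ = ∫⁻ y in ⋃ b : ↥u, (cube n (↑b : Pt n × ℝ).1 (↑b : Pt n × ℝ).2 ∩ G), f y := by
          rw [Measure.restrict_iUnion hd hmeas]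
      _ ≤ B :=
          lintegral_mono' (Measure.restrict_mono
            (Set.iUnion_subset fun b => Set.inter_subset_right) le_rfl) le_rfl
  calc volume {x | x ∈ cube n c r ∧ lam < mxIn n G f x}
      ≤ volume (⋃ b : ↥u, cube n (↑b : Pt n × ℝ).1 (5 * (↑b : Pt n × ℝ).2)) :=
        measure_mono hcover
    _ ≤ ∑' b : ↥u, volume (cube n (↑b : Pt n × ℝ).1 (5 * (↑b : Pt n × ℝ).2)) :=
        measure_iUnion_le _
    _ = ∑' b : ↥u, ENNReal.ofReal ((5 : ℝ) ^ (n : ℝ)) *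
          ENNReal.ofReal ((↑b : Pt n × ℝ).2 ^ (n : ℝ)) := by
        refine tsum_congr fun b => ?_
        rw [volume_cube (by have := hpos b; linarith), scale (by norm_num) (hpos b).le]
    _ ≤ ∑' b : ↥u, (ENNReal.ofReal ((5 : ℝ) ^ (n : ℝ)) * lam⁻¹) *
          ∫⁻ y in cube n (↑b : Pt n × ℝ).1 (↑b : Pt n × ℝ).2 ∩ G, f y := by
        refine ENNReal.tsum_le_tsum fun b => ?_
        have hb2 : ENNReal.ofReal ((↑b : Pt n × ℝ).2 ^ (n : ℝ)) ≤
            lam⁻¹ * ∫⁻ y in cube n (↑b : Pt n × ℝ).1 (↑b : Pt n × ℝ).2 ∩ G, f y := by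
          have hkey := (hut b.2).2.2
          have h3 := mul_le_mul_right hkey lam⁻¹
          rwa [← mul_assoc, ENNReal.inv_mul_cancel hl0 hltop, one_mul] at h3
        calc ENNReal.ofReal ((5 : ℝ) ^ (n : ℝ)) * ENNReal.ofReal ((↑b : Pt n × ℝ).2 ^ (n : ℝ))
            ≤ ENNReal.ofReal ((5 : ℝ) ^ (n : ℝ)) *
              (lam⁻¹ * ∫⁻ y in cube n (↑b : Pt n × ℝ).1 (↑b : Pt n × ℝ).2 ∩ G, f y) :=
              mul_le_mul_right hb2 _
          _ = _ := by rw [mul_assoc]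
    _ = (ENNReal.ofReal ((5 : ℝ) ^ (n : ℝ)) * lam⁻¹) *
          ∑' b : ↥u, ∫⁻ y in cube n (↑b : Pt n × ℝ).1 (↑b : Pt n × ℝ).2 ∩ G, f y :=
        ENNReal.tsum_mul_left
    _ ≤ ENNReal.ofReal ((5 : ℝ) ^ (n : ℝ)) * lam⁻¹ * B := mul_le_mul_right hsum _

/-- Kolmogorov-type inequality: the `δ`-power of the localized maximal function is integrable,
with the natural bound. -/
lemma kolmogorov (hn : 0 < n) {δ : ℝ} (hδ0 : 0 < δ) (hδ1 : δ < 1) (f : Pt n → ℝ≥0∞)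
    {c : Pt n} {r : ℝ} (hr : 0 < r) (hB : (∫⁻ y in cube n c (3 * r), f y) ≠ ⊤) :
    (∫⁻ x in cube n c r, (mxIn n (cube n c (3 * r)) f x) ^ δ) ≤
      (1 + ENNReal.ofReal ((5 : ℝ) ^ (n : ℝ)) * (2 : ℝ≥0∞) ^ δ *
          (1 - (2 : ℝ≥0∞) ^ (δ - 1))⁻¹) *
        ((∫⁻ y in cube n c (3 * r), f y) * (ENNReal.ofReal (r ^ (n : ℝ)))⁻¹) ^ δ *
        ENNReal.ofReal (r ^ (n : ℝ)) := by
  set G := cube n c (3 * r) with hG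
  set B := ∫⁻ y in G, f y with hBdef
  set V := ENNReal.ofReal (r ^ (n : ℝ)) with hV
  have hV0 : V ≠ 0 := vne0 hr
  have hVtop : V ≠ ⊤ := vnetop
  by_cases hB0 : B = 0
  · have hzero : ∀ x, mxIn n G f x = 0 := by
      intro x
      rw [mxIn]
      refine le_antisymm (iSup₂_le fun s hs => ?_) zero_le
      have h0 : (∫⁻ y in cube n x s ∩ G, f y) = 0 :=
        le_antisymm (hB0 ▸ lintegral_mono' (Measure.restrict_mono Set.inter_subset_right le_rfl)
          le_rfl) zero_le
      rw [h0, mul_zero]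
    have hz2 : ∀ x, (mxIn n G f x) ^ δ = 0 := fun x => by
      rw [hzero x, ENNReal.zero_rpow_of_pos hδ0]
    calc (∫⁻ x in cube n c r, (mxIn n G f x) ^ δ)
        = ∫⁻ _ in cube n c r, (0 : ℝ≥0∞) := lintegral_congr fun x => hz2 x
      _ = 0 := lintegral_zero
      _ ≤ _ := zero_le
  · set T := B * V⁻¹ with hT
    have hT0 : T ≠ 0 := mul_ne_zero hB0 (ENNReal.inv_ne_zero.mpr hVtop)
    have hTtop : T ≠ ⊤ := ENNReal.mul_ne_top hB (ENNReal.inv_ne_top.mpr hV0)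
    have hTpos : 0 < T := lt_of_le_of_ne zero_le (Ne.symm hT0)
    have hlam0 : ∀ k : ℕ, (2 : ℝ≥0∞) ^ k * T ≠ 0 := fun k =>
      mul_ne_zero (pow_ne_zero k (by norm_num)) hT0
    have hlamtop : ∀ k : ℕ, (2 : ℝ≥0∞) ^ k * T ≠ ⊤ := fun k =>
      ENNReal.mul_ne_top (ENNReal.pow_ne_top ENNReal.ofNat_ne_top) hTtop
    set E : ℕ → Set (Pt n) := fun k =>
      {x | x ∈ cube n c r ∧ (2 : ℝ≥0∞) ^ k * T < mxIn n G f x} with hE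
    choose Gm hGsub hGmeas hGeq using fun k : ℕ => exists_measurable_superset volume (E k)
    have hmaj : ∀ x ∈ cube n c r, (mxIn n G f x) ^ δ ≤
        T ^ δ + ∑' k : ℕ, ((2 : ℝ≥0∞) ^ (k + 1) * T) ^ δ *
          (Gm k).indicator (1 : Pt n → ℝ≥0∞) x := by
      intro x hx
      by_cases hxT : mxIn n G f x ≤ T
      · calc (mxIn n G f x) ^ δ ≤ T ^ δ := ENNReal.rpow_le_rpow hxT hδ0.le
          _ ≤ _ := le_self_add
      · push_neg at hxT
        by_cases hall : ∀ k : ℕ, (2 : ℝ≥0∞) ^ k * T < mxIn n G f x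
        · have htop : (∑' k : ℕ, ((2 : ℝ≥0∞) ^ (k + 1) * T) ^ δ *
              (Gm k).indicator (1 : Pt n → ℝ≥0∞) x) = ⊤ := by
            refine eq_top_iff.mpr ?_
            have hterm : ∀ k : ℕ, T ^ δ ≤ ((2 : ℝ≥0∞) ^ (k + 1) * T) ^ δ *
                (Gm k).indicator (1 : Pt n → ℝ≥0∞) x := by
              intro k
              rw [Set.indicator_of_mem (hGsub k ⟨hx, hall k⟩), Pi.one_apply, mul_one]
              refine ENNReal.rpow_le_rpow ?_ hδ0.le
              exact le_mul_of_one_le_left zero_le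
                (one_le_two.trans (le_self_pow₀ one_le_two (Nat.succ_ne_zero k)))
            have hTδ0 : T ^ δ ≠ 0 := (ENNReal.rpow_pos hTpos hTtop).ne'
            calc (⊤ : ℝ≥0∞) = ∑' _ : ℕ, T ^ δ :=
                (ENNReal.tsum_const_eq_top_of_ne_zero hTδ0).symm
              _ ≤ _ := ENNReal.tsum_le_tsum hterm
          rw [htop, add_top]
          exact le_top
        · push_neg at hall
          have hex : ∃ j : ℕ, mxIn n G f x ≤ (2 : ℝ≥0∞) ^ j * T := hall
          have hj0 : mxIn n G f x ≤ (2 : ℝ≥0∞) ^ (Nat.find hex) * T := Nat.find_spec hex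
          have hj0ne : Nat.find hex ≠ 0 := by
            intro h
            rw [h, pow_zero, one_mul] at hj0
            exact absurd hj0 (not_le.mpr hxT)
          obtain ⟨m, hm⟩ := Nat.exists_eq_succ_of_ne_zero hj0ne
          have hmlt : (2 : ℝ≥0∞) ^ m * T < mxIn n G f x :=
            not_le.mp (Nat.find_min hex (by omega))
          have hxE : x ∈ E m := ⟨hx, hmlt⟩
          have hind : ((2 : ℝ≥0∞) ^ (m + 1) * T) ^ δ *
              (Gm m).indicator (1 : Pt n → ℝ≥0∞) x = ((2 : ℝ≥0∞) ^ (m + 1) * T) ^ δ := by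
            rw [Set.indicator_of_mem (hGsub m hxE), Pi.one_apply, mul_one]
          calc (mxIn n G f x) ^ δ ≤ ((2 : ℝ≥0∞) ^ (m + 1) * T) ^ δ := by
                refine ENNReal.rpow_le_rpow ?_ hδ0.le
                rw [hm] at hj0; exact hj0
            _ = ((2 : ℝ≥0∞) ^ (m + 1) * T) ^ δ *
                (Gm m).indicator (1 : Pt n → ℝ≥0∞) x := hind.symm
            _ ≤ ∑' k : ℕ, ((2 : ℝ≥0∞) ^ (k + 1) * T) ^ δ *
                (Gm k).indicator (1 : Pt n → ℝ≥0∞) x := ENNReal.le_tsum m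
            _ ≤ _ := le_add_self
    have hmeasg : ∀ k : ℕ, Measurable fun x : Pt n =>
        ((2 : ℝ≥0∞) ^ (k + 1) * T) ^ δ * (Gm k).indicator (1 : Pt n → ℝ≥0∞) x := fun k =>
      (measurable_one.indicator (hGmeas k)).const_mul _
    have hEbound : ∀ k : ℕ, volume (Gm k) ≤
        ENNReal.ofReal ((5 : ℝ) ^ (n : ℝ)) * ((2 : ℝ≥0∞) ^ k * T)⁻¹ * B := by
      intro k
      rw [hGeq k]
      exact weak_type hn f (hlam0 k) (hlamtop k) hB
    have hint2 : (∫⁻ x in cube n c r, ∑' k : ℕ, ((2 : ℝ≥0∞) ^ (k + 1) * T) ^ δ *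
        (Gm k).indicator (1 : Pt n → ℝ≥0∞) x) ≤
        ∑' k : ℕ, ((2 : ℝ≥0∞) ^ (k + 1) * T) ^ δ *
          (ENNReal.ofReal ((5 : ℝ) ^ (n : ℝ)) * ((2 : ℝ≥0∞) ^ k * T)⁻¹ * B) := by
      rw [lintegral_tsum fun k => (hmeasg k).aemeasurable]
      refine ENNReal.tsum_le_tsum fun k => ?_
      rw [lintegral_const_mul _ (measurable_one.indicator (hGmeas k))]
      refine mul_le_mul_right ?_ _
      rw [lintegral_indicator (hGmeas k)]
      calc (∫⁻ _ in Gm k, (1 : ℝ≥0∞) ∂(volume.restrict (cube n c r))) ≤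
            ∫⁻ _ in Gm k, (1 : ℝ≥0∞) ∂volume :=
          lintegral_mono' (Measure.restrict_mono le_rfl Measure.restrict_le_self) le_rfl
        _ = volume (Gm k) := by rw [setLIntegral_const, one_mul]
        _ ≤ _ := hEbound k
    have hterm : ∀ k : ℕ, ((2 : ℝ≥0∞) ^ (k + 1) * T) ^ δ *
        (ENNReal.ofReal ((5 : ℝ) ^ (n : ℝ)) * ((2 : ℝ≥0∞) ^ k * T)⁻¹ * B) =
        (ENNReal.ofReal ((5 : ℝ) ^ (n : ℝ)) * (2 : ℝ≥0∞) ^ δ * T ^ δ * V) *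
          ((2 : ℝ≥0∞) ^ (δ - 1)) ^ k := by
      intro k
      have h2pow0 : ((2 : ℝ≥0∞) ^ k) ≠ 0 := pow_ne_zero k (by norm_num)
      have h2powtop : ((2 : ℝ≥0∞) ^ k) ≠ ⊤ := ENNReal.pow_ne_top ENNReal.ofNat_ne_top
      have hBT : T⁻¹ * B = V := by
        rw [hT, ENNReal.mul_inv (Or.inl hB0) (Or.inl hB), inv_inv, mul_comm B⁻¹ V,
          mul_assoc, ENNReal.inv_mul_cancel hB0 hB, mul_one]
      have hsplit1 : ((2 : ℝ≥0∞) ^ (k + 1) * T) ^ δ =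
          ((2 : ℝ≥0∞) ^ (k + 1)) ^ δ * T ^ δ := ENNReal.mul_rpow_of_nonneg _ _ hδ0.le
      have hinv : ((2 : ℝ≥0∞) ^ k * T)⁻¹ = ((2 : ℝ≥0∞) ^ k)⁻¹ * T⁻¹ :=
        ENNReal.mul_inv (Or.inl h2pow0) (Or.inl h2powtop)
      have hpow2 : ((2 : ℝ≥0∞) ^ (k + 1)) ^ δ * ((2 : ℝ≥0∞) ^ k)⁻¹ =
          (2 : ℝ≥0∞) ^ δ * ((2 : ℝ≥0∞) ^ (δ - 1)) ^ k := by
        rw [← ENNReal.rpow_natCast (2 : ℝ≥0∞) (k + 1), ← ENNReal.rpow_natCast (2 : ℝ≥0∞) k,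
          ← ENNReal.rpow_mul, ← ENNReal.rpow_neg, ← ENNReal.rpow_add _ _ (by norm_num)
            ENNReal.ofNat_ne_top]
        rw [← ENNReal.rpow_natCast ((2 : ℝ≥0∞) ^ (δ - 1)) k, ← ENNReal.rpow_mul,
          ← ENNReal.rpow_add _ _ (by norm_num) ENNReal.ofNat_ne_top]
        congr 1
        push_cast
        ring
      calc ((2 : ℝ≥0∞) ^ (k + 1) * T) ^ δ *
            (ENNReal.ofReal ((5 : ℝ) ^ (n : ℝ)) * ((2 : ℝ≥0∞) ^ k * T)⁻¹ * B)
          = (((2 : ℝ≥0∞) ^ (k + 1)) ^ δ * ((2 : ℝ≥0∞) ^ k)⁻¹) *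
              (ENNReal.ofReal ((5 : ℝ) ^ (n : ℝ)) * T ^ δ * (T⁻¹ * B)) := by
            rw [hsplit1, hinv]; ring
        _ = ((2 : ℝ≥0∞) ^ δ * ((2 : ℝ≥0∞) ^ (δ - 1)) ^ k) *
              (ENNReal.ofReal ((5 : ℝ) ^ (n : ℝ)) * T ^ δ * V) := by rw [hpow2, hBT]
        _ = _ := by ring
    have hq1 : (2 : ℝ≥0∞) ^ (δ - 1) < 1 := by
      have := ENNReal.rpow_lt_rpow_of_exponent_lt (x := 2) one_lt_two ENNReal.ofNat_ne_top
        (by linarith : δ - 1 < 0)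
      rwa [ENNReal.rpow_zero] at this
    have hgeo : (∑' k : ℕ, ((2 : ℝ≥0∞) ^ (δ - 1)) ^ k) = (1 - (2 : ℝ≥0∞) ^ (δ - 1))⁻¹ :=
      ENNReal.tsum_geometric _
    calc (∫⁻ x in cube n c r, (mxIn n G f x) ^ δ)
        ≤ ∫⁻ x in cube n c r, (T ^ δ + ∑' k : ℕ, ((2 : ℝ≥0∞) ^ (k + 1) * T) ^ δ *
            (Gm k).indicator (1 : Pt n → ℝ≥0∞) x) :=
          setLIntegral_mono' measurableSet_cube hmaj
      _ = T ^ δ * volume (cube n c r) +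
            ∫⁻ x in cube n c r, ∑' k : ℕ, ((2 : ℝ≥0∞) ^ (k + 1) * T) ^ δ *
              (Gm k).indicator (1 : Pt n → ℝ≥0∞) x := by
          rw [lintegral_add_left measurable_const, setLIntegral_const]
      _ ≤ T ^ δ * V + ∑' k : ℕ, ((2 : ℝ≥0∞) ^ (k + 1) * T) ^ δ *
            (ENNReal.ofReal ((5 : ℝ) ^ (n : ℝ)) * ((2 : ℝ≥0∞) ^ k * T)⁻¹ * B) := by
          rw [volume_cube hr.le, ← hV]
          exact add_le_add le_rfl hint2
      _ = T ^ δ * V + (ENNReal.ofReal ((5 : ℝ) ^ (n : ℝ)) * (2 : ℝ≥0∞) ^ δ * T ^ δ * V) *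
            (1 - (2 : ℝ≥0∞) ^ (δ - 1))⁻¹ := by
          rw [tsum_congr hterm, ENNReal.tsum_mul_left, hgeo]
      _ = (1 + ENNReal.ofReal ((5 : ℝ) ^ (n : ℝ)) * (2 : ℝ≥0∞) ^ δ *
            (1 - (2 : ℝ≥0∞) ^ (δ - 1))⁻¹) * T ^ δ * V := by ring

/-- The main per-cube A₂ estimate for the `δ`-power of the maximal function, `n ≥ 1`. -/
lemma main_bound (hn : 0 < n) {δ : ℝ} (hδ0 : 0 < δ) (hδ1 : δ < 1) (f : Pt n → ℝ≥0∞)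
    (c : Pt n) {r : ℝ} (hr : 0 < r) :
    ((ENNReal.ofReal (r ^ (n : ℝ)))⁻¹ * ∫⁻ x in cube n c r, (mx n f x) ^ δ) *
      ((ENNReal.ofReal (r ^ (n : ℝ)))⁻¹ * ∫⁻ x in cube n c r, ((mx n f x) ^ δ)⁻¹) ≤
    (1 + ENNReal.ofReal ((5 : ℝ) ^ (n : ℝ)) * (2 : ℝ≥0∞) ^ δ *
        (1 - (2 : ℝ≥0∞) ^ (δ - 1))⁻¹) * (ENNReal.ofReal ((4 : ℝ) ^ (n : ℝ))) ^ δ +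
      (ENNReal.ofReal ((2 : ℝ) ^ (n : ℝ))) ^ δ := by
  set V := ENNReal.ofReal (r ^ (n : ℝ)) with hV
  have hV0 : V ≠ 0 := vne0 hr
  have hVtop : V ≠ ⊤ := vnetop
  set G := cube n c (3 * r) with hG
  set B := ∫⁻ y in G, f y with hBdef
  set m0 := ⨅ (y : Pt n) (_ : y ∈ cube n c r), mx n f y with hm0
  set A := (ENNReal.ofReal ((4 * r) ^ (n : ℝ)))⁻¹ * B with hA
  set CK := (1 + ENNReal.ofReal ((5 : ℝ) ^ (n : ℝ)) * (2 : ℝ≥0∞) ^ δ *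
      (1 - (2 : ℝ≥0∞) ^ (δ - 1))⁻¹) with hCK
  set c2 := ENNReal.ofReal ((2 : ℝ) ^ (n : ℝ)) with hc2
  have hAm0 : A ≤ m0 := le_iInf fun y => le_iInf fun hy => le_mx f hr hy
  by_cases hm0top : m0 = ⊤
  · have hzero : (∫⁻ x in cube n c r, ((mx n f x) ^ δ)⁻¹) = 0 := by
      refine le_antisymm ?_ zero_le
      have hpt : ∀ x ∈ cube n c r, ((mx n f x) ^ δ)⁻¹ ≤ 0 := by
        intro x hx
        have hmx : mx n f x = ⊤ := top_le_iff.mp (hm0top ▸ iInf₂_le x hx)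
        rw [hmx, ENNReal.top_rpow_of_pos hδ0, ENNReal.inv_top]
      calc (∫⁻ x in cube n c r, ((mx n f x) ^ δ)⁻¹) ≤ ∫⁻ _ in cube n c r, (0 : ℝ≥0∞) :=
          setLIntegral_mono' measurableSet_cube hpt
        _ = 0 := lintegral_zero
    rw [hzero, mul_zero, mul_zero]
    exact zero_le
  · by_cases hBtop : B = ⊤
    · exfalso
      have hAtop : A = ⊤ := by
        rw [hA, hBtop, ENNReal.mul_top (ENNReal.inv_ne_zero.mpr vnetop)]
      exact hm0top (top_le_iff.mp (hAtop ▸ hAm0))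
    · have hkol := kolmogorov hn hδ0 hδ1 f hr hBtop
      have hsp : ∀ x ∈ cube n c r, (mx n f x) ^ δ ≤
          (mxIn n G f x) ^ δ + (c2 * m0) ^ δ := by
        intro x hx
        calc (mx n f x) ^ δ ≤ (mxIn n G f x + c2 * m0) ^ δ :=
            ENNReal.rpow_le_rpow (mx_le_add f hr hx) hδ0.le
          _ ≤ _ := ENNReal.rpow_add_le_add_rpow _ _ hδ0.le hδ1.le
      have hcancel : ∀ X : ℝ≥0∞, V⁻¹ * (X * V) = X := by
        intro X
        rw [mul_comm X V, ← mul_assoc, ENNReal.inv_mul_cancel hV0 hVtop, one_mul]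
      have hF1 : V⁻¹ * ∫⁻ x in cube n c r, (mx n f x) ^ δ ≤
          CK * (B * V⁻¹) ^ δ + c2 ^ δ * m0 ^ δ := by
        have h1 : (∫⁻ x in cube n c r, (mx n f x) ^ δ) ≤
            (∫⁻ x in cube n c r, (mxIn n G f x) ^ δ) + (c2 * m0) ^ δ * V := by
          calc (∫⁻ x in cube n c r, (mx n f x) ^ δ)
              ≤ ∫⁻ x in cube n c r, ((mxIn n G f x) ^ δ + (c2 * m0) ^ δ) :=
              setLIntegral_mono' measurableSet_cube hsp
            _ = (∫⁻ x in cube n c r, (mxIn n G f x) ^ δ) + (c2 * m0) ^ δ * V := by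
              rw [lintegral_add_right _ measurable_const, setLIntegral_const,
                volume_cube hr.le]
        have h2 : (∫⁻ x in cube n c r, (mxIn n G f x) ^ δ) ≤ CK * (B * V⁻¹) ^ δ * V := hkol
        calc V⁻¹ * ∫⁻ x in cube n c r, (mx n f x) ^ δ
            ≤ V⁻¹ * (CK * (B * V⁻¹) ^ δ * V + (c2 * m0) ^ δ * V) :=
            mul_le_mul_right (h1.trans (add_le_add h2 le_rfl)) _
          _ = CK * (B * V⁻¹) ^ δ + (c2 * m0) ^ δ := by
            rw [mul_add, hcancel, hcancel]
          _ = CK * (B * V⁻¹) ^ δ + c2 ^ δ * m0 ^ δ := by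
            rw [ENNReal.mul_rpow_of_nonneg c2 m0 hδ0.le]
      have hF2 : V⁻¹ * ∫⁻ x in cube n c r, ((mx n f x) ^ δ)⁻¹ ≤ (m0 ^ δ)⁻¹ := by
        have hpt : ∀ x ∈ cube n c r, ((mx n f x) ^ δ)⁻¹ ≤ (m0 ^ δ)⁻¹ := by
          intro x hx
          exact ENNReal.inv_le_inv.mpr (ENNReal.rpow_le_rpow (iInf₂_le x hx) hδ0.le)
        calc V⁻¹ * ∫⁻ x in cube n c r, ((mx n f x) ^ δ)⁻¹
            ≤ V⁻¹ * ((m0 ^ δ)⁻¹ * V) := by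
              refine mul_le_mul_right ?_ _
              calc (∫⁻ x in cube n c r, ((mx n f x) ^ δ)⁻¹)
                  ≤ ∫⁻ _ in cube n c r, (m0 ^ δ)⁻¹ :=
                  setLIntegral_mono' measurableSet_cube hpt
                _ = (m0 ^ δ)⁻¹ * V := by rw [setLIntegral_const, volume_cube hr.le]
          _ = (m0 ^ δ)⁻¹ := hcancel _
      have hF2' : V⁻¹ * ∫⁻ x in cube n c r, ((mx n f x) ^ δ)⁻¹ ≤ (A ^ δ)⁻¹ :=
        hF2.trans (ENNReal.inv_le_inv.mpr (ENNReal.rpow_le_rpow hAm0 hδ0.le))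
      have hTA : B * V⁻¹ = ENNReal.ofReal ((4 : ℝ) ^ (n : ℝ)) * A := by
        have h4 : ENNReal.ofReal ((4 * r) ^ (n : ℝ)) =
            ENNReal.ofReal ((4 : ℝ) ^ (n : ℝ)) * V := scale (by norm_num) hr.le
        have h40 : ENNReal.ofReal ((4 : ℝ) ^ (n : ℝ)) ≠ 0 := vne0 (by norm_num)
        rw [hA, h4, ENNReal.mul_inv (Or.inl h40) (Or.inl vnetop), ← mul_assoc,
          ← mul_assoc, ENNReal.mul_inv_cancel h40 vnetop, one_mul, mul_comm V⁻¹ B]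
      calc ((V⁻¹ * ∫⁻ x in cube n c r, (mx n f x) ^ δ) *
            (V⁻¹ * ∫⁻ x in cube n c r, ((mx n f x) ^ δ)⁻¹))
          ≤ (CK * (B * V⁻¹) ^ δ + c2 ^ δ * m0 ^ δ) *
            (V⁻¹ * ∫⁻ x in cube n c r, ((mx n f x) ^ δ)⁻¹) := mul_le_mul_left hF1 _
        _ = CK * (B * V⁻¹) ^ δ * (V⁻¹ * ∫⁻ x in cube n c r, ((mx n f x) ^ δ)⁻¹) +
            c2 ^ δ * (m0 ^ δ * (V⁻¹ * ∫⁻ x in cube n c r, ((mx n f x) ^ δ)⁻¹)) := by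
            ring
        _ ≤ CK * (B * V⁻¹) ^ δ * (A ^ δ)⁻¹ + c2 ^ δ * (m0 ^ δ * (m0 ^ δ)⁻¹) :=
            add_le_add (mul_le_mul_right hF2' _)
              (mul_le_mul_right (mul_le_mul_right hF2 _) _)
        _ = CK * ((ENNReal.ofReal ((4 : ℝ) ^ (n : ℝ))) ^ δ * (A ^ δ * (A ^ δ)⁻¹)) +
            c2 ^ δ * (m0 ^ δ * (m0 ^ δ)⁻¹) := by
            rw [hTA, ENNReal.mul_rpow_of_nonneg _ _ hδ0.le]; ring
        _ ≤ CK * ((ENNReal.ofReal ((4 : ℝ) ^ (n : ℝ))) ^ δ * 1) + c2 ^ δ * 1 :=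
            add_le_add (mul_le_mul_right (mul_le_mul_right (ENNReal.mul_inv_le_one _) _) _)
              (mul_le_mul_right (ENNReal.mul_inv_le_one _) _)
        _ = CK * (ENNReal.ofReal ((4 : ℝ) ^ (n : ℝ))) ^ δ + c2 ^ δ := by
            rw [mul_one, mul_one]

/-- The `n = 0` case is trivial: everything is constant on a one-point space. -/
lemma main_zero (g : Pt 0 → ℝ≥0∞) (c : Pt 0) {r : ℝ} (hr : 0 < r) :
    ((ENNReal.ofReal (r ^ ((0 : ℕ) : ℝ)))⁻¹ * ∫⁻ x in cube 0 c r, g x) *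
      ((ENNReal.ofReal (r ^ ((0 : ℕ) : ℝ)))⁻¹ * ∫⁻ x in cube 0 c r, (g x)⁻¹) ≤ 1 := by
  haveI : Subsingleton (Pt 0) :=
    ⟨fun a b => by ext i; exact i.elim0⟩
  have hVone : ENNReal.ofReal (r ^ ((0 : ℕ) : ℝ)) = 1 := by
    norm_num
  have hVol : volume (cube 0 c r) = 1 := by
    rw [volume_cube hr.le]; exact hVone
  have hg : ∀ h : Pt 0 → ℝ≥0∞, (∫⁻ x in cube 0 c r, h x) = h c := by
    intro h
    calc (∫⁻ x in cube 0 c r, h x) = ∫⁻ _ in cube 0 c r, h c :=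
        lintegral_congr fun x => by rw [Subsingleton.elim x c]
      _ = h c := by rw [setLIntegral_const, hVol, mul_one]
  rw [hVone, hg g, hg fun x => (g x)⁻¹]
  simp only [inv_one, one_mul]
  exact ENNReal.mul_inv_le_one _

end A2

/-- If `w ∈ 𝔏^{α,p}(ℝ^{n+1})` with `p > ρ > 1` and `p > 1/α`, then for a.e. `t` the
function `w_*(·,t)` is an `A₂(ℝⁿ)` weight with `A₂` constant uniform in `t`. -/
theorem xMaximal_A2_uniform (n : ℕ) (α p ρ : ℝ) (hα : 0 < α) (hρ : 1 < ρ)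
    (hpρ : ρ < p) (hpα : 1 / α < p) (w : EuclideanSpace ℝ (Fin n) × ℝ → ℝ)
    (hw : morreyNormP n α p w < ⊤) :
    ∃ C > (0:ℝ), ∀ᵐ t : ℝ ∂volume, ∀ (c : EuclideanSpace ℝ (Fin n)) (r : ℝ), 0 < r →
      ((ENNReal.ofReal (r ^ (n : ℝ)))⁻¹ * ∫⁻ x in cube n c r, xMaximal n ρ w x t) *
        ((ENNReal.ofReal (r ^ (n : ℝ)))⁻¹ * ∫⁻ x in cube n c r, (xMaximal n ρ w x t)⁻¹) ≤
      ENNReal.ofReal C := by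
  classical
  have hρ0 : (0 : ℝ) < ρ := lt_trans one_pos hρ
  have hδ0 : 0 < 1 / ρ := by positivity
  have hδ1 : 1 / ρ < 1 := by rw [div_lt_one hρ0]; exact hρ
  set CC : ℝ≥0∞ :=
    ((1 + ENNReal.ofReal ((5 : ℝ) ^ (n : ℝ)) * (2 : ℝ≥0∞) ^ (1 / ρ) *
        (1 - (2 : ℝ≥0∞) ^ (1 / ρ - 1))⁻¹) * (ENNReal.ofReal ((4 : ℝ) ^ (n : ℝ))) ^ (1 / ρ) +
      (ENNReal.ofReal ((2 : ℝ) ^ (n : ℝ))) ^ (1 / ρ)) + 1 with hCC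
  have hq1 : (2 : ℝ≥0∞) ^ (1 / ρ - 1) < 1 := by
    have h := ENNReal.rpow_lt_rpow_of_exponent_lt (x := 2) one_lt_two ENNReal.ofNat_ne_top
      (by linarith : 1 / ρ - 1 < (0 : ℝ))
    rwa [ENNReal.rpow_zero] at h
  have hCCtop : CC ≠ ⊤ := by
    have h2 : (2 : ℝ≥0∞) ^ (1 / ρ) ≠ ⊤ :=
      ENNReal.rpow_ne_top_of_nonneg hδ0.le ENNReal.ofNat_ne_top
    have hinv : (1 - (2 : ℝ≥0∞) ^ (1 / ρ - 1))⁻¹ ≠ ⊤ :=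
      ENNReal.inv_ne_top.mpr (ne_of_gt (tsub_pos_of_lt hq1))
    have h4 : (ENNReal.ofReal ((4 : ℝ) ^ (n : ℝ))) ^ (1 / ρ) ≠ ⊤ :=
      ENNReal.rpow_ne_top_of_nonneg hδ0.le ENNReal.ofReal_ne_top
    have h2' : (ENNReal.ofReal ((2 : ℝ) ^ (n : ℝ))) ^ (1 / ρ) ≠ ⊤ :=
      ENNReal.rpow_ne_top_of_nonneg hδ0.le ENNReal.ofReal_ne_top
    exact ENNReal.add_ne_top.mpr ⟨ENNReal.add_ne_top.mpr
      ⟨ENNReal.mul_ne_top (ENNReal.add_ne_top.mpr ⟨ENNReal.one_ne_top,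
        ENNReal.mul_ne_top (ENNReal.mul_ne_top ENNReal.ofReal_ne_top h2) hinv⟩) h4, h2'⟩,
      ENNReal.one_ne_top⟩
  have hCC1 : 1 ≤ CC := le_add_self
  have hCCof : ENNReal.ofReal CC.toReal = CC := ENNReal.ofReal_toReal hCCtop
  refine ⟨CC.toReal, ENNReal.toReal_pos (lt_of_lt_of_le zero_lt_one hCC1).ne' hCCtop, ?_⟩
  refine Filter.Eventually.of_forall fun t => ?_
  intro c r hr
  rcases Nat.eq_zero_or_pos n with h0 | hn
  · subst h0
    calc ((ENNReal.ofReal (r ^ ((0 : ℕ) : ℝ)))⁻¹ *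
            ∫⁻ x in cube 0 c r, xMaximal 0 ρ w x t) *
          ((ENNReal.ofReal (r ^ ((0 : ℕ) : ℝ)))⁻¹ *
            ∫⁻ x in cube 0 c r, (xMaximal 0 ρ w x t)⁻¹)
        ≤ 1 := A2.main_zero (fun x => xMaximal 0 ρ w x t) c hr
      _ ≤ CC := hCC1
      _ = ENNReal.ofReal CC.toReal := hCCof.symm
  · have heq : ∀ x, xMaximal n ρ w x t =
        (A2.mx n (fun y => ENNReal.ofReal (|w (y, t)| ^ ρ)) x) ^ (1 / ρ) := fun x => rfl
    have h1 := A2.main_bound hn hδ0 hδ1 (fun y => ENNReal.ofReal (|w (y, t)| ^ ρ)) c hr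
    calc ((ENNReal.ofReal (r ^ (n : ℝ)))⁻¹ * ∫⁻ x in cube n c r, xMaximal n ρ w x t) *
          ((ENNReal.ofReal (r ^ (n : ℝ)))⁻¹ * ∫⁻ x in cube n c r, (xMaximal n ρ w x t)⁻¹)
        = ((ENNReal.ofReal (r ^ (n : ℝ)))⁻¹ * ∫⁻ x in cube n c r,
            (A2.mx n (fun y => ENNReal.ofReal (|w (y, t)| ^ ρ)) x) ^ (1 / ρ)) *
          ((ENNReal.ofReal (r ^ (n : ℝ)))⁻¹ * ∫⁻ x in cube n c r,
            ((A2.mx n (fun y => ENNReal.ofReal (|w (y, t)| ^ ρ)) x) ^ (1 / ρ))⁻¹) := by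
          simp only [heq]
      _ ≤ (1 + ENNReal.ofReal ((5 : ℝ) ^ (n : ℝ)) * (2 : ℝ≥0∞) ^ (1 / ρ) *
            (1 - (2 : ℝ≥0∞) ^ (1 / ρ - 1))⁻¹) * (ENNReal.ofReal ((4 : ℝ) ^ (n : ℝ))) ^ (1 / ρ) +
          (ENNReal.ofReal ((2 : ℝ) ^ (n : ℝ))) ^ (1 / ρ) := h1
      _ ≤ CC := le_self_add
      _ = ENNReal.ofReal CC.toReal := hCCof.symm
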